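/- For 1 ≤ k ≤ l, let N(k) denote the number of indices j ∈ {0, …, f − 1} with m^{(k)}_j = 0. If f is odd (so l = f), then N(k) = k for k odd and N(k) = l − k for k even. If f is even (so l = 2f), then for k odd one has N(k) = k if k ≤ l/2 and N(k) = l − k if k > l/2, while for k even one has N(k) = l/2 − k if k ≤ l/2 and N(k) = k − l/2 if k > l/2. -/

import Mathlib

open Polynomial

/-- The tuple `μ ∈ (ℤ ± x)^f`:  `μ₀ = x - 1`, `μ₁ = p - 2 - x`, and
`μ_j = p - 1 - x` for `2 ≤ j ≤ f - 1`.  Indices are taken in `ZMod f`. -/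
noncomputable def muTuple (p f : ℕ) : ZMod f → Polynomial ℤ := fun j =>
  if j = 0 then X - 1
  else if j = 1 then C ((p : ℤ) - 2) - X
  else C ((p : ℤ) - 1) - X

/-- `muIter p f k = μ^{(k)} = g^{k-1}μ ∘ ⋯ ∘ gμ ∘ μ`, with `μ^{(0)} = (x, …, x)`;
composition and the cyclic shift `g` (`(gλ)_j = λ_{j+1}`) are componentwise. -/
noncomputable def muIter (p f : ℕ) : ℕ → ZMod f → Polynomial ℤ
  | 0 => fun _ => X
  | k + 1 => fun j => (muTuple p f (j + (k : ZMod f))).comp (muIter p f k j)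

/-- `msign p f k = m^{(k)} ∈ (ℤ/2)^f`: the `j`-th entry is `0` iff the leading
coefficient of `μ^{(k)}_j` is `+1`. -/
noncomputable def msign (p f k : ℕ) (j : ZMod f) : ZMod 2 :=
  if (muIter p f k j).coeff 1 = 1 then 0 else 1

/-- `l = f` if `f` is odd and `l = 2f` if `f` is even. -/
def cycLen (f : ℕ) : ℕ := if Odd f then f else 2 * f

/-- `N(k)`: the number of indices `j` with `m^{(k)}_j = 0`. -/
noncomputable def numZeros (p f k : ℕ) : ℕ :=
  Nat.card {j : ZMod f // msign p f k j = 0}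

lemma aux_comp (a : ℤ) (q : Polynomial ℤ) :
    ((C a - X).comp q).coeff 1 = -(q.coeff 1) := by
  rw [sub_comp, C_comp, X_comp, coeff_sub, coeff_C]; simp

lemma coeff1_muIter (p f : ℕ) (k : ℕ) (j : ZMod f) :
    (muIter p f k j).coeff 1
      = ∏ i ∈ Finset.range k, (if ((j + (i : ZMod f)) = 0) then (1:ℤ) else -1) := by
  induction k with
  | zero => simp [muIter]
  | succ k ih =>
    rw [Finset.prod_range_succ, ← ih]
    show ((muTuple p f (j + (k : ZMod f))).comp (muIter p f k j)).coeff 1 = _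
    unfold muTuple
    split_ifs with h1 h2
    · simp [sub_comp, coeff_sub, coeff_one]
    · rw [aux_comp]; ring
    · rw [aux_comp]; ring

lemma mod_eq_iff' {f t i : ℕ} (hf : 0 < f) (ht : t < f) (hi : i < 2 * f) :
    i % f = t ↔ i = t ∨ i = t + f := by
  constructor
  · intro h
    have key := Nat.div_add_mod i f
    have hq : i / f < 2 := (Nat.div_lt_iff_lt_mul hf).mpr (by omega)
    interval_cases h2 : i / f <;> omega
  · rintro (rfl | rfl)
    · exact Nat.mod_eq_of_lt ht
    · rw [Nat.add_mod_right]; exact Nat.mod_eq_of_lt ht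

lemma card_filter_mod {f t k : ℕ} (hf : 0 < f) (ht : t < f) (hk : k ≤ 2 * f) :
    ((Finset.range k).filter (fun i => i % f = t)).card
      = (if t < k then 1 else 0) + (if t + f < k then 1 else 0) := by
  have hiff : ∀ i ∈ Finset.range k, i % f = t ↔ i = t ∨ i = t + f := fun i hi =>
    mod_eq_iff' hf ht (by simp only [Finset.mem_range] at hi; omega)
  rw [Finset.filter_congr hiff]
  by_cases h2 : t + f < k
  · have h1 : t < k := by omega
    have : (Finset.range k).filter (fun i => i = t ∨ i = t + f) = {t, t + f} := by
      ext i
      simp only [Finset.mem_filter, Finset.mem_range, Finset.mem_insert, Finset.mem_singleton]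
      omega
    rw [this, Finset.card_insert_of_notMem (by simp; omega), Finset.card_singleton]
    simp [h1, h2]
  · by_cases h1 : t < k
    · have : (Finset.range k).filter (fun i => i = t ∨ i = t + f) = {t} := by
        ext i
        simp only [Finset.mem_filter, Finset.mem_range, Finset.mem_singleton]
        omega
      rw [this]; simp [h1, h2]
    · have : (Finset.range k).filter (fun i => i = t ∨ i = t + f) = ∅ := by
        ext i
        simp only [Finset.mem_filter, Finset.mem_range, Finset.notMem_empty, iff_false]
        omega
      rw [this]; simp [h1, h2]

lemma msign_eq_zero_iff (p f k : ℕ) (j : ZMod f) :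
    msign p f k j = 0 ↔ (muIter p f k j).coeff 1 = 1 := by
  unfold msign
  split_ifs with h <;> simp [h]

lemma msign_zero_iff_even (p f k : ℕ) (hf : 1 < f) (hk : k ≤ 2 * f) (j : ZMod f) :
    msign p f k j = 0 ↔
      (Even k ↔ Even ((if (-j).val < k then 1 else 0) + (if (-j).val + f < k then 1 else 0))) := by
  haveI : NeZero f := ⟨by omega⟩
  rw [msign_eq_zero_iff, coeff1_muIter]
  rw [Finset.prod_ite]
  simp only [Finset.prod_const_one, Finset.prod_const, one_mul]
  set c := ((Finset.range k).filter (fun i : ℕ => j + (i : ZMod f) = 0)).card with hc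
  set d := ((Finset.range k).filter (fun i : ℕ => ¬(j + (i : ZMod f) = 0))).card with hd
  have hcd : c + d = k := by
    rw [hc, hd, Finset.card_filter_add_card_filter_not, Finset.card_range]
  -- identify c with the mod count
  have hcond : ∀ i : ℕ, (j + (i : ZMod f) = 0) ↔ i % f = (-j).val := by
    intro i
    rw [add_comm, add_eq_zero_iff_eq_neg]
    constructor
    · intro h; rw [← h, ZMod.val_natCast]
    · intro h
      apply ZMod.val_injective
      rw [ZMod.val_natCast]
      exact h
  have hceq : c = (if (-j).val < k then 1 else 0) + (if (-j).val + f < k then 1 else 0) := by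
    rw [hc, Finset.filter_congr (fun i _ => hcond i)]
    exact card_filter_mod (by omega) (ZMod.val_lt _) hk
  have hckle : c ≤ k := by omega
  rw [show ((-1 : ℤ) ^ d = 1 ↔ Even d) from
    neg_one_pow_eq_one_iff_even (by norm_num)]
  have hdk : d = k - c := by omega
  rw [hdk, Nat.even_sub hckle, hceq]

lemma numZeros_eq (p f k : ℕ) (hf : 1 < f) (hk : k ≤ 2 * f) :
    numZeros p f k = ((Finset.range f).filter
      (fun t => Even k ↔ Even ((if t < k then 1 else 0) + (if t + f < k then 1 else 0)))).card := by
  haveI : NeZero f := ⟨by omega⟩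
  rw [numZeros, Nat.card_eq_fintype_card, Fintype.card_subtype]
  refine Finset.card_nbij' (fun j => (-j).val) (fun t => -(t : ZMod f)) ?_ ?_ ?_ ?_
  · intro j hj
    simp only [Finset.mem_coe, Finset.mem_filter, Finset.mem_univ, true_and] at hj
    simp only [Finset.mem_coe, Finset.mem_filter, Finset.mem_range]
    exact ⟨ZMod.val_lt _, (msign_zero_iff_even p f k hf hk j).mp hj⟩
  · intro t ht
    simp only [Finset.mem_coe, Finset.mem_filter, Finset.mem_range] at ht
    simp only [Finset.mem_coe, Finset.mem_filter, Finset.mem_univ, true_and]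
    rw [msign_zero_iff_even p f k hf hk]
    rw [neg_neg, ZMod.val_natCast, Nat.mod_eq_of_lt ht.1]
    exact ht.2
  · intro j _
    simp only
    rw [show (((-j).val : ℕ) : ZMod f) = -j from ZMod.natCast_rightInverse (-j), neg_neg]
  · intro t ht
    simp only [Finset.mem_coe, Finset.mem_filter, Finset.mem_range] at ht
    simp only
    rw [neg_neg, ZMod.val_natCast, Nat.mod_eq_of_lt ht.1]

lemma count_card (f k : ℕ) (hf : 0 < f) (hk1 : 1 ≤ k) (hk : k ≤ 2 * f) :
    ((Finset.range f).filter
      (fun t => Even k ↔ Even ((if t < k then 1 else 0) + (if t + f < k then 1 else 0)))).card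
    = if k ≤ f then (if k % 2 = 1 then k else f - k)
      else (if k % 2 = 1 then 2 * f - k else k - f) := by
  by_cases hkf : k ≤ f <;> by_cases hpar : k % 2 = 1
  · have hset : (Finset.range f).filter
        (fun t => Even k ↔ Even ((if t < k then 1 else 0) + (if t + f < k then 1 else 0)))
        = Finset.range k := by
      ext t
      simp only [Finset.mem_filter, Finset.mem_range, Nat.even_iff]
      split_ifs <;> simp_all <;> omega
    rw [hset, Finset.card_range]
    simp [hkf, hpar]
  · have hset : (Finset.range f).filter
        (fun t => Even k ↔ Even ((if t < k then 1 else 0) + (if t + f < k then 1 else 0)))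
        = Finset.range f \ Finset.range k := by
      ext t
      simp only [Finset.mem_filter, Finset.mem_range, Finset.mem_sdiff, Nat.even_iff]
      split_ifs <;> simp_all <;> omega
    rw [hset, Finset.card_sdiff_of_subset (Finset.range_subset_range.mpr hkf), Finset.card_range,
      Finset.card_range]
    simp [hkf, hpar]
  · have hset : (Finset.range f).filter
        (fun t => Even k ↔ Even ((if t < k then 1 else 0) + (if t + f < k then 1 else 0)))
        = Finset.range f \ Finset.range (k - f) := by
      ext t
      simp only [Finset.mem_filter, Finset.mem_range, Finset.mem_sdiff, Nat.even_iff]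
      split_ifs <;> simp_all <;> omega
    rw [hset, Finset.card_sdiff_of_subset (Finset.range_subset_range.mpr (by omega)), Finset.card_range,
      Finset.card_range]
    simp only [hkf, hpar, if_false, if_true]
    omega
  · have hset : (Finset.range f).filter
        (fun t => Even k ↔ Even ((if t < k then 1 else 0) + (if t + f < k then 1 else 0)))
        = Finset.range (k - f) := by
      ext t
      simp only [Finset.mem_filter, Finset.mem_range, Nat.even_iff]
      split_ifs <;> simp_all <;> omega
    rw [hset, Finset.card_range]
    simp [hkf, hpar]

/-- The count of `0`'s in `m^{(k)}`, for `1 ≤ k ≤ l`. -/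
theorem numZeros_formula (p f : ℕ) (hp : p.Prime) (hp3 : 3 < p) (hf : 1 < f)
    (k : ℕ) (hk1 : 1 ≤ k) (hk2 : k ≤ cycLen f) :
    (Odd f →
      (Odd k → numZeros p f k = k) ∧
      (Even k → numZeros p f k = cycLen f - k)) ∧
    (Even f →
      (Odd k →
        (k ≤ cycLen f / 2 → numZeros p f k = k) ∧
        (cycLen f / 2 < k → numZeros p f k = cycLen f - k)) ∧
      (Even k →
        (k ≤ cycLen f / 2 → numZeros p f k = cycLen f / 2 - k) ∧
        (cycLen f / 2 < k → numZeros p f k = k - cycLen f / 2))) := by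
  have h2f : k ≤ 2 * f := by
    unfold cycLen at hk2; split_ifs at hk2 <;> omega
  have hNZ := numZeros_eq p f k hf h2f
  rw [count_card f k (by omega) hk1 h2f] at hNZ
  rcases Nat.even_or_odd f with hef | hof
  · have hlo : ¬ Odd f := Nat.not_odd_iff_even.mpr hef
    have hl : cycLen f = 2 * f := if_neg hlo
    refine ⟨fun hof' => absurd hof' hlo, fun _ => ?_⟩
    constructor
    · intro hok
      rw [Nat.odd_iff] at hok
      constructor
      · intro hle
        simp only [hl] at hle
        rw [hNZ]; split_ifs <;> omega
      · intro hgt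
        simp only [hl] at hgt
        rw [hNZ, hl]; split_ifs <;> omega
    · intro hek
      rw [Nat.even_iff] at hek
      constructor
      · intro hle
        simp only [hl] at hle
        rw [hNZ, hl]; split_ifs <;> omega
      · intro hgt
        simp only [hl] at hgt
        rw [hNZ, hl]; split_ifs <;> omega
  · have hl : cycLen f = f := if_pos hof
    rw [hl] at hk2
    refine ⟨fun _ => ?_, fun hef' => absurd hef' (Nat.not_even_iff_odd.mpr hof)⟩
    constructor
    · intro hok
      rw [Nat.odd_iff] at hok
      rw [hNZ]; split_ifs <;> omega
    · intro hek
      rw [Nat.even_iff] at hek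
      rw [hNZ, hl]; split_ifs <;> omega
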